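/- Let f be a string-to-string function with origin information. The following are equivalent: (1) for every input string w, the origin map of f(w) is order-preserving, i.e. whenever an output position precedes another output position, the origin of the first is less than or equal to the origin of the second; (2) for all input strings v, w, the sequence of block labels of the fully erased factored output f(v̄ | w̄) is one of: the empty sequence, [left], [right], or [left, right] (i.e. it belongs to (ε + left)(ε + right)). (Theorem 4, equivalence of items 1 and 2.) -/

import Mathlib

/-- Index of the part containing (0-based) position `i`, where `ls` is the list of
lengths of the parts of the input. Positions beyond all parts get index `ls.length`. -/
def partOf : List ℕ → ℕ → ℕ
  | [], _ => 0
  | l :: ls, i => if i < l then 0 else partOf ls (i - l) + 1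

/-- `f` is a string-to-string function with origin information: every origin occurring
in the output of `f` on `w` is a position of `w`. -/
def HasOrigins {A B : Type} (f : List A → List (B × ℕ)) : Prop :=
  ∀ w : List A, ∀ p ∈ f w, p.2 < w.length

/-- The blocks of the factored output of `f` for the factorization `parts` of the input:
each output letter of `f` on the concatenation of the parts is classified by the index of
the part containing its origin, maximal consecutive runs with the same classification are
grouped into blocks, and each block is recorded as its part index together with the string
of output letters it carries. -/
def blocksOf {A B : Type} (f : List A → List (B × ℕ)) (parts : List (List A)) :
    List (ℕ × List B) :=
  (((f parts.flatten).map fun p => (partOf (parts.map List.length) p.2, p.1)).splitBy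
    (fun x y => x.1 == y.1)).map fun blk => ((blk.map Prod.fst).headD 0, blk.map Prod.snd)

/-- The factored output of `f` for the factorization `parts`, where the contents of
blocks whose part index satisfies `erased` are erased (only the label is kept). -/
def factored {A B : Type} (f : List A → List (B × ℕ)) (parts : List (List A))
    (erased : ℕ → Bool) : List (ℕ × Option (List B)) :=
  (blocksOf f parts).map fun b => (b.1, if erased b.1 then none else some b.2)

/-- The left derivative `∂_v f`, i.e. `w ↦ f(v̄ | w)`. -/
def leftDeriv {A B : Type} (f : List A → List (B × ℕ)) (v : List A) :
    List A → List (ℕ × Option (List B)) :=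
  fun w => factored f [v, w] (· == 0)

/-- The right derivative `f∂_w`, i.e. `v ↦ f(v | w̄)`. -/
def rightDeriv {A B : Type} (f : List A → List (B × ℕ)) (w : List A) :
    List A → List (ℕ × Option (List B)) :=
  fun v => factored f [v, w] (· == 1)

/-- `f(v̄ | a | w̄)`: the factored output of `f(v·a·w)` for the split `(v, a, w)`
with the contents of the `v`-blocks and the `w`-blocks erased. -/
def charVal {A B : Type} (f : List A → List (B × ℕ)) (a : A) (v w : List A) :
    List (ℕ × Option (List B)) :=
  factored f [v, [a], w] (fun k => !(k == 1))

/-- A language is regular if it is accepted by a DFA with finitely many states. -/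
def IsRegularLang {A : Type} (L : Set (List A)) : Prop :=
  ∃ (Q : Type) (_ : Fintype Q) (M : DFA A Q), M.accepts = L

/-- A colouring of strings is regular if it has finite image and all its preimages
are regular languages. -/
def IsRegularColouring {A X : Type} (g : List A → X) : Prop :=
  (Set.range g).Finite ∧ ∀ x : X, IsRegularLang {w | g w = x}

/-- A colouring of pairs of strings is regular if it factors through a pair of
regular colourings of strings. -/
def IsRegularColouring₂ {A X : Type} (g : List A → List A → X) : Prop :=
  ∃ (X₁ X₂ : Type) (g₁ : List A → X₁) (g₂ : List A → X₂),
    IsRegularColouring g₁ ∧ IsRegularColouring g₂ ∧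
    ∀ v v' w w', g₁ v = g₁ v' → g₂ w = g₂ w' → g v w = g v' w'

/-- `listPow v i` is the `i`-fold concatenation `v^i`. -/
def listPow {A : Type} (v : List A) (i : ℕ) : List A := (List.replicate i v).flatten

private lemma partOf_mono (ls : List ℕ) : ∀ {i j : ℕ}, i ≤ j → partOf ls i ≤ partOf ls j := by
  induction ls with
  | nil => intro i j _; exact le_refl _
  | cons l ls ih =>
    intro i j h
    simp only [partOf]
    split
    · exact Nat.zero_le _
    · rw [if_neg (by omega)]
      exact Nat.succ_le_succ (ih (by omega))

private lemma partOf_lt (ls : List ℕ) : ∀ {i : ℕ}, i < ls.sum → partOf ls i < ls.length := by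
  induction ls with
  | nil => intro i h; simp at h
  | cons l ls ih =>
    intro i h
    simp only [partOf, List.length_cons, List.sum_cons] at *
    split
    · omega
    · have := ih (i := i - l) (by omega)
      omega

private def lab {B : Type} (blk : List (ℕ × B)) : ℕ := (blk.map Prod.fst).headD 0

private lemma head_fst_const {B : Type} :
    ∀ (a : ℕ × B) (t : List (ℕ × B)), List.IsChain (fun x y => x.1 = y.1) (a :: t) →
      ∀ p ∈ a :: t, p.1 = a.1 := by
  intro a t
  induction t generalizing a with
  | nil =>
    intro _ p hp
    simp only [List.mem_singleton] at hp
    rw [hp]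
  | cons b t ih =>
    intro h p hp
    rw [List.isChain_cons_cons] at h
    rcases List.mem_cons.mp hp with rfl | hp
    · rfl
    · rw [ih b h.2 p hp, ← h.1]

private lemma const_of_mem {B : Type} {l blk : List (ℕ × B)}
    (h : blk ∈ l.splitBy (fun x y => x.1 == y.1)) : ∀ p ∈ blk, p.1 = lab blk := by
  have hne := List.ne_nil_of_mem_splitBy h
  have hc := List.isChain_of_mem_splitBy h
  obtain ⟨a, t, rfl⟩ := List.exists_cons_of_ne_nil hne
  have hc' : List.IsChain (fun x y : ℕ × B => x.1 = y.1) (a :: t) :=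
    hc.imp fun x y hxy => by simpa using hxy
  intro p hp
  rw [head_fst_const a t hc' p hp]
  simp [lab]

private lemma chain_lt_of_chain_le {B : Type} {l : List (ℕ × B)}
    (h : (l.map Prod.fst).IsChain (· ≤ ·)) :
    ((l.splitBy (fun x y => x.1 == y.1)).map lab).IsChain (· < ·) := by
  set bs := l.splitBy (fun x y => x.1 == y.1) with hbs
  have hflat : bs.flatten = l := List.flatten_splitBy _ _
  have hne : ∀ blk ∈ bs, blk ≠ [] := fun blk hb => List.ne_nil_of_mem_splitBy hb
  have hmapflat : (bs.map (List.map Prod.fst)).flatten = l.map Prod.fst := by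
    rw [← List.map_flatten, hflat]
  have hnil : [] ∉ bs.map (List.map Prod.fst) := by
    simp only [List.mem_map, not_exists]
    rintro blk ⟨hb, hblk⟩
    exact hne blk hb (by simpa using hblk)
  have hacross := ((List.isChain_flatten hnil).mp (hmapflat ▸ h)).2
  rw [List.isChain_map] at hacross
  have hlh := List.isChain_getLast_head_splitBy (fun x y : ℕ × B => x.1 == y.1) l
  rw [← hbs] at hlh
  rw [List.isChain_map, List.isChain_iff_getElem]
  rw [List.isChain_iff_getElem] at hacross hlh
  intro i hi
  have h1 := hacross i hi
  have h2 := hlh i hi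
  obtain ⟨hne1, hne2, hfalse⟩ := h2
  set b1 := bs[i]'(by omega) with hb1
  set b2 := bs[i + 1]'(by omega) with hb2
  have hm1 : b1 ∈ bs := List.getElem_mem _
  have hm2 : b2 ∈ bs := List.getElem_mem _
  have e1 : (b1.getLast hne1).1 = lab b1 := const_of_mem hm1 _ (List.getLast_mem hne1)
  have e2 : (b2.head hne2).1 = lab b2 := const_of_mem hm2 _ (List.head_mem hne2)
  have hle : (b1.getLast hne1).1 ≤ (b2.head hne2).1 := by
    apply h1
    · rw [List.getLast?_map, List.getLast?_eq_getLast hne1]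
      simp
    · rw [List.head?_map, List.head?_eq_head hne2]
      simp
  have hneq : (b1.getLast hne1).1 ≠ (b2.head hne2).1 := by simpa using hfalse
  rw [e1, e2] at hle hneq
  exact lt_of_le_of_ne hle hneq

private lemma chain_le_of_labels_chain_le {B : Type} {l : List (ℕ × B)}
    (h : ((l.splitBy (fun x y => x.1 == y.1)).map lab).IsChain (· ≤ ·)) :
    (l.map Prod.fst).IsChain (· ≤ ·) := by
  set bs := l.splitBy (fun x y => x.1 == y.1) with hbs
  have hflat : bs.flatten = l := List.flatten_splitBy _ _
  have hne : ∀ blk ∈ bs, blk ≠ [] := fun blk hb => List.ne_nil_of_mem_splitBy hb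
  have hmapflat : (bs.map (List.map Prod.fst)).flatten = l.map Prod.fst := by
    rw [← List.map_flatten, hflat]
  have hnil : [] ∉ bs.map (List.map Prod.fst) := by
    simp only [List.mem_map, not_exists]
    rintro blk ⟨hb, hblk⟩
    exact hne blk hb (by simpa using hblk)
  rw [← hmapflat, List.isChain_flatten hnil]
  constructor
  · intro m hm
    obtain ⟨blk, hb, rfl⟩ := List.mem_map.mp hm
    exact List.isChain_map_of_isChain Prod.fst
      (fun a b hab => le_of_eq (by simpa using hab)) (List.isChain_of_mem_splitBy hb)
  · rw [List.isChain_map]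
    rw [List.isChain_map] at h
    rw [List.isChain_iff_getElem] at h ⊢
    intro i hi
    intro x hx y hy
    have h0 := h i hi
    set b1 := bs[i]'(by omega) with hb1
    set b2 := bs[i + 1]'(by omega) with hb2
    have hm1 : b1 ∈ bs := List.getElem_mem _
    have hm2 : b2 ∈ bs := List.getElem_mem _
    rw [List.getLast?_map, Option.mem_def, Option.map_eq_some_iff] at hx
    rw [List.head?_map, Option.mem_def, Option.map_eq_some_iff] at hy
    obtain ⟨p, hp, rfl⟩ := hx
    obtain ⟨q, hq, rfl⟩ := hy
    rw [const_of_mem hm1 p (List.mem_of_mem_getLast? hp),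
        const_of_mem hm2 q (List.mem_of_mem_head? hq)]
    exact h0

private lemma labels_bounded {B : Type} {l : List (ℕ × B)} {n : ℕ}
    (h : ∀ p ∈ l, p.1 < n) :
    ∀ x ∈ (l.splitBy (fun x y => x.1 == y.1)).map lab, x < n := by
  intro x hx
  obtain ⟨blk, hb, rfl⟩ := List.mem_map.mp hx
  have hne := List.ne_nil_of_mem_splitBy hb
  have hmem : blk.head hne ∈ l := by
    rw [← List.flatten_splitBy (fun x y : ℕ × B => x.1 == y.1) l]
    exact List.mem_flatten.mpr ⟨blk, hb, List.head_mem hne⟩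
  rw [← const_of_mem hb _ (List.head_mem hne)]
  exact h _ hmem

private lemma mem_quad {xs : List ℕ} (h1 : xs.IsChain (· < ·)) (h2 : ∀ x ∈ xs, x < 2) :
    xs ∈ ({[], [0], [1], [0, 1]} : Set (List ℕ)) := by
  simp only [Set.mem_insert_iff, Set.mem_singleton_iff]
  match xs with
  | [] => tauto
  | [a] =>
    have := h2 a (by simp)
    interval_cases a <;> simp
  | [a, b] =>
    have hab : a < b := by
      rw [List.isChain_cons_cons] at h1
      exact h1.1
    have hb2 := h2 b (by simp)
    have ha : a = 0 := by omega
    have hbv : b = 1 := by omega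
    subst ha; subst hbv; simp
  | a :: b :: c :: t =>
    exfalso
    rw [List.isChain_cons_cons, List.isChain_cons_cons] at h1
    have := h2 c (by simp)
    omega

private lemma blocks_labels {A B : Type} (f : List A → List (B × ℕ)) (v w : List A) :
    (blocksOf f [v, w]).map Prod.fst
      = (((f ([v, w].flatten)).map fun p => (partOf [v.length, w.length] p.2, p.1)).splitBy
          (fun x y => x.1 == y.1)).map lab := by
  simp [blocksOf, lab, List.map_map, Function.comp_def]

/-- Theorem 4 (items 1 ↔ 2): the origin map of `f` is order-preserving on every input
iff for all `v, w` the sequence of block labels of the fully erased factored output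
`f(v̄ | w̄)` belongs to `(ε + left)(ε + right)`. -/
theorem order_preserving_iff_blocks {A B : Type}
    (f : List A → List (B × ℕ)) (hf : HasOrigins f) :
    (∀ w : List A, List.Pairwise (· ≤ ·) ((f w).map Prod.snd)) ↔
      ∀ v w : List A, (blocksOf f [v, w]).map Prod.fst ∈
        ({[], [0], [1], [0, 1]} : Set (List ℕ)) := by
  constructor
  · intro hs v w
    rw [blocks_labels]
    apply mem_quad
    · apply chain_lt_of_chain_le
      have hc : ((f ([v, w].flatten)).map Prod.snd).IsChain (· ≤ ·) :=
        List.isChain_iff_pairwise.mpr (hs ([v, w].flatten))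
      rw [List.map_map, List.isChain_map]
      rw [List.isChain_map] at hc
      exact hc.imp fun a b hab => partOf_mono _ hab
    · apply labels_bounded
      intro p hp
      obtain ⟨q, hq, rfl⟩ := List.mem_map.mp hp
      have hq2 := hf _ q hq
      have hlen : ([v, w].flatten).length = v.length + w.length := by simp
      have := partOf_lt [v.length, w.length] (i := q.2) (by simp; omega)
      simpa using this
  · intro hb w
    have hi' : ((f w).map Prod.snd).IsChain (· ≤ ·) := by
      rw [List.isChain_iff_getElem]
      intro i hi
      simp only [List.get_eq_getElem, List.getElem_map]
      simp only [List.length_map] at hi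
      by_contra hlt
      push_neg at hlt
      set b := ((f w)[i + 1]'(by omega)).2 with hbdef
      have hbw : b < w.length := hf w _ (List.getElem_mem _)
      have hiw : ((f w)[i]'(by omega)).2 < w.length := hf w _ (List.getElem_mem _)
      have hmem := hb (w.take (b + 1)) (w.drop (b + 1))
      have e1 : ([w.take (b + 1), w.drop (b + 1)] : List (List A)).flatten = w := by simp
      have e2 : (w.take (b + 1)).length = b + 1 := by rw [List.length_take]; omega
      have e3 : (w.drop (b + 1)).length = w.length - (b + 1) := List.length_drop
      rw [blocks_labels, e1, e2, e3] at hmem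
      have hch : ((((f w).map fun p =>
          (partOf [b + 1, w.length - (b + 1)] p.2, p.1)).splitBy
            (fun x y => x.1 == y.1)).map lab).IsChain (· ≤ ·) := by
        simp only [Set.mem_insert_iff, Set.mem_singleton_iff] at hmem
        rcases hmem with h | h | h | h <;> rw [h] <;>
          simp [List.isChain_cons_cons]
      have hcle := chain_le_of_labels_chain_le hch
      rw [List.map_map, List.isChain_map, List.isChain_iff_getElem] at hcle
      have key := hcle i (by omega)
      simp only [List.get_eq_getElem, Function.comp_def, partOf] at key
      split_ifs at key <;> omega
    exact List.isChain_iff_pairwise.mp hi'
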